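/- For every fixed nonzero vector x ∈ ℝⁿ, P( V x = 0 ) ≤ 2·exp(−m/24). -/

import Mathlib

open MeasureTheory ProbabilityTheory Real


lemma aux_prod_rows {ι κ Ω : Type} [Fintype ι] [DecidableEq ι] [Fintype κ]
    [MeasurableSpace Ω] (P : Measure Ω) [IsProbabilityMeasure P]
    (f : ι × κ → Ω → ℝ) (hmeas : ∀ p, Measurable (f p))
    (hindep : iIndepFun f P)
    (g : ι → (κ → ℝ) → ℝ) (hg : ∀ i, Measurable (g i)) (t : Finset ι) :
    P (⋂ i ∈ t, {ω | g i (fun j => f (i, j) ω) = 0})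
      = ∏ i ∈ t, P {ω | g i (fun j => f (i, j) ω) = 0} := by
  classical
  induction t using Finset.induction_on with
  | empty => simp
  | @insert a t ha ih =>
    have hdisj : Disjoint ({a} ×ˢ (Finset.univ : Finset κ)) (t ×ˢ (Finset.univ : Finset κ)) := by
      rw [Finset.disjoint_left]
      rintro ⟨i, j⟩ hS hT
      simp only [Finset.mem_product, Finset.mem_singleton] at hS hT
      exact ha (hS.1 ▸ hT.1)
    have hIF := hindep.indepFun_finset _ _ hdisj hmeas
    set S := ({a} ×ˢ (Finset.univ : Finset κ)) with hSdef
    set T := (t ×ˢ (Finset.univ : Finset κ)) with hTdef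
    have hmemS : ∀ j : κ, ((a, j) : ι × κ) ∈ S := fun j => by
      simp [hSdef, Finset.mem_product]
    have hmemT : ∀ i, i ∈ t → ∀ j : κ, ((i, j) : ι × κ) ∈ T := fun i hi j => by
      simp [hTdef, Finset.mem_product, hi]
    -- the set for the first block
    set FA : (S → ℝ) → ℝ := fun v => g a (fun j => v ⟨(a, j), hmemS j⟩) with hFAdef
    have hFA : Measurable FA :=
      (hg a).comp (measurable_pi_lambda _ fun j => measurable_pi_apply _)
    -- the set for the second block
    set GT : Set ((p : T) → ℝ) :=
      ⋂ i, ⋂ (h : i ∈ t), {v | g i (fun j => v ⟨(i, j), hmemT i h j⟩) = 0} with hGTdef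
    have hGT : MeasurableSet GT := by
      refine MeasurableSet.iInter fun i => MeasurableSet.iInter fun h => ?_
      exact ((hg i).comp (measurable_pi_lambda _ fun j => measurable_pi_apply _))
        (measurableSet_singleton 0)
    have hpre1 : (fun ω (p : S) => f p ω) ⁻¹' (FA ⁻¹' {0})
        = {ω | g a (fun j => f (a, j) ω) = 0} := rfl
    have hpre2 : (fun ω (p : T) => f p ω) ⁻¹' GT
        = ⋂ i ∈ t, {ω | g i (fun j => f (i, j) ω) = 0} := by
      ext ω
      simp only [hGTdef, Set.mem_preimage, Set.mem_iInter, Set.mem_setOf_eq]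
    have hmul := hIF.measure_inter_preimage_eq_mul (FA ⁻¹' {0}) GT
      (hFA (measurableSet_singleton 0)) hGT
    rw [hpre1, hpre2] at hmul
    rw [Finset.set_biInter_insert, hmul, Finset.prod_insert ha, ih]


lemma aux_row_bound {ι κ Ω : Type} [Fintype κ] [DecidableEq κ]
    [MeasurableSpace Ω] (P : Measure Ω) [IsProbabilityMeasure P]
    (f : ι × κ → Ω → ℝ) (hmeas : ∀ p, Measurable (f p))
    (hindep : iIndepFun f P)
    (i : ι) (j₀ : κ)
    (hdist : Measure.map (f (i, j₀)) P =
      (1/2 : ENNReal) • Measure.dirac (1 : ℝ) + (1/2 : ENNReal) • Measure.dirac (-1 : ℝ))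
    (x : κ → ℝ) (hx : x j₀ ≠ 0) :
    P {ω | ∑ j, f (i, j) ω * x j = 0} ≤ 1/2 := by
  classical
  set c := x j₀ with hc
  set X : Ω → ℝ := f (i, j₀) with hX
  set Sr : Ω → ℝ := fun ω => ∑ j ∈ Finset.univ.erase j₀, f (i, j) ω * x j with hSr
  -- independence of X and Sr
  have hdisj : Disjoint ({(i, j₀)} : Finset (ι × κ)) ({i} ×ˢ Finset.univ.erase j₀) := by
    rw [Finset.disjoint_left]
    rintro ⟨a, b⟩ hS hT
    simp only [Finset.mem_singleton, Prod.mk.injEq] at hS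
    simp only [Finset.mem_product, Finset.mem_singleton, Finset.mem_erase] at hT
    exact hT.2.1 (hS.2)
  have hIF0 := hindep.indepFun_finset _ _ hdisj hmeas
  set S := ({(i, j₀)} : Finset (ι × κ)) with hSdef
  set T := ({i} ×ˢ Finset.univ.erase j₀ : Finset (ι × κ)) with hTdef
  have hmemS : ((i, j₀) : ι × κ) ∈ S := Finset.mem_singleton_self _
  have hmemT : ∀ j ∈ Finset.univ.erase j₀, ((i, j) : ι × κ) ∈ T := fun j hj =>
    Finset.mem_product.mpr ⟨Finset.mem_singleton_self i, hj⟩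
  set φ : (S → ℝ) → ℝ := fun v => v ⟨(i, j₀), hmemS⟩ with hφ
  set ψ : (T → ℝ) → ℝ := fun v =>
    ∑ j ∈ (Finset.univ.erase j₀).attach, v ⟨(i, j.1), hmemT j.1 j.2⟩ * x j.1 with hψ
  have hφm : Measurable φ := measurable_pi_apply _
  have hψm : Measurable ψ :=
    Finset.measurable_sum _ fun j _ => (measurable_pi_apply _).mul_const _
  have hIF : IndepFun X Sr P := by
    have := hIF0.comp hφm hψm
    have hXeq : φ ∘ (fun ω (p : S) => f p ω) = X := rfl
    have hSeq : ψ ∘ (fun ω (p : T) => f p ω) = Sr := by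
      funext ω
      show ∑ j ∈ (Finset.univ.erase j₀).attach, f (i, j.1) ω * x j.1
        = ∑ j ∈ Finset.univ.erase j₀, f (i, j) ω * x j
      exact Finset.sum_attach (Finset.univ.erase j₀) (fun j => f (i, j) ω * x j)
    rwa [hXeq, hSeq] at this
  -- express the event
  have hsplit : {ω | ∑ j, f (i, j) ω * x j = 0}
      ⊆ (X ⁻¹' {1} ∩ Sr ⁻¹' {-c}) ∪ (X ⁻¹' {-1} ∩ Sr ⁻¹' {c}) ∪ X ⁻¹' ({1, -1}ᶜ) := by
    intro ω hω
    have hsum : Sr ω + X ω * c = 0 := by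
      rw [hSr, hX, hc]
      simpa using (Finset.sum_erase_add Finset.univ (fun j => f (i, j) ω * x j)
        (Finset.mem_univ j₀)).trans hω
    by_cases h1 : X ω = 1
    · left; left
      refine ⟨h1, ?_⟩
      simp only [Set.mem_preimage, Set.mem_singleton_iff]
      rw [h1] at hsum; linarith
    by_cases h2 : X ω = -1
    · left; right
      refine ⟨h2, ?_⟩
      simp only [Set.mem_preimage, Set.mem_singleton_iff]
      rw [h2] at hsum; linarith
    · right
      simp only [Set.mem_preimage, Set.mem_compl_iff, Set.mem_insert_iff,
        Set.mem_singleton_iff]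
      tauto
  -- probabilities of X-events
  have hXmap : ∀ s : Set ℝ, MeasurableSet s → P (X ⁻¹' s) =
      (1/2 : ENNReal) * s.indicator 1 1 + (1/2 : ENNReal) * s.indicator 1 (-1) := by
    intro s hs
    rw [← Measure.map_apply (hmeas _) hs, ← hX, hdist]
    simp [Measure.dirac_apply' _ hs]
  have hX1 : P (X ⁻¹' {1}) = 1/2 := by
    rw [hXmap _ (measurableSet_singleton _)]
    norm_num
  have hX2 : P (X ⁻¹' {-1}) = 1/2 := by
    rw [hXmap _ (measurableSet_singleton _)]
    norm_num
  have hXc : P (X ⁻¹' ({1, -1}ᶜ)) = 0 := by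
    rw [hXmap _ ((MeasurableSet.insert (measurableSet_singleton _) _).compl)]
    norm_num
  -- Sr events
  have hSrm : Measurable Sr :=
    Finset.measurable_sum _ fun j _ => (hmeas _).mul_const _
  have hSsum : P (Sr ⁻¹' {-c}) + P (Sr ⁻¹' {c}) ≤ 1 := by
    have hdisj2 : Disjoint (Sr ⁻¹' {-c}) (Sr ⁻¹' {c}) := by
      rw [Set.disjoint_left]
      intro ω h1 h2
      simp only [Set.mem_preimage, Set.mem_singleton_iff] at h1 h2
      apply hx
      have : -c = c := h1 ▸ h2 ▸ rfl
      linarith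
    calc P (Sr ⁻¹' {-c}) + P (Sr ⁻¹' {c})
        = P (Sr ⁻¹' {-c} ∪ Sr ⁻¹' {c}) :=
          (measure_union hdisj2 (hSrm (measurableSet_singleton _))).symm
      _ ≤ 1 := prob_le_one
  calc P {ω | ∑ j, f (i, j) ω * x j = 0}
      ≤ P ((X ⁻¹' {1} ∩ Sr ⁻¹' {-c}) ∪ (X ⁻¹' {-1} ∩ Sr ⁻¹' {c}) ∪ X ⁻¹' ({1, -1}ᶜ)) :=
        measure_mono hsplit
    _ ≤ P (X ⁻¹' {1} ∩ Sr ⁻¹' {-c}) + P (X ⁻¹' {-1} ∩ Sr ⁻¹' {c}) + P (X ⁻¹' ({1, -1}ᶜ)) :=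
        le_trans (measure_union_le _ _) (add_le_add_left (measure_union_le _ _) _)
    _ = (1/2) * P (Sr ⁻¹' {-c}) + (1/2) * P (Sr ⁻¹' {c}) + 0 := by
        rw [hIF.measure_inter_preimage_eq_mul _ _ (measurableSet_singleton _)
            (measurableSet_singleton _),
          hIF.measure_inter_preimage_eq_mul _ _ (measurableSet_singleton _)
            (measurableSet_singleton _), hX1, hX2, hXc]
    _ = (1/2) * (P (Sr ⁻¹' {-c}) + P (Sr ⁻¹' {c})) := by ring
    _ ≤ (1/2) * 1 := by
        exact mul_le_mul_right hSsum _
    _ = 1/2 := mul_one _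


/-- For an `m × n` matrix `V` with i.i.d. Rademacher entries and any fixed
nonzero vector `x ∈ ℝⁿ`, `P(Vx = 0) ≤ 2·exp(−m/24)`. -/
theorem rademacher_matrix_kernel_prob
    {Ω : Type} [MeasurableSpace Ω] (P : Measure Ω) [IsProbabilityMeasure P]
    (m n : ℕ) (V : Fin m → Fin n → Ω → ℝ)
    (hindep : iIndepFun
      (fun p : Fin m × Fin n => V p.1 p.2) P)
    (hdist : ∀ i j, Measure.map (V i j) P =
      (1/2 : ENNReal) • Measure.dirac (1 : ℝ) + (1/2 : ENNReal) • Measure.dirac (-1 : ℝ))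
    (x : Fin n → ℝ) (hx : x ≠ 0) :
    P {ω | ∀ i : Fin m, ∑ j, V i j ω * x j = 0}
      ≤ ENNReal.ofReal (2 * Real.exp (-(m : ℝ) / 24)) := by
  classical
  obtain ⟨j₀, hj₀⟩ : ∃ j, x j ≠ 0 := by
    by_contra h; push_neg at h; exact hx (funext h)
  set W : Fin m × Fin n → Ω → ℝ := fun p => V p.1 p.2 with hWdef
  have haem : ∀ p : Fin m × Fin n, AEMeasurable (W p) P := by
    intro p
    by_contra h
    have h0 := Measure.map_of_not_aemeasurable h
    have h0' : ((0 : Measure ℝ)) =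
        (1/2 : ENNReal) • Measure.dirac (1 : ℝ) + (1/2 : ENNReal) • Measure.dirac (-1 : ℝ) := by
      rw [← h0]; exact hdist p.1 p.2
    have := congrArg (fun μ : Measure ℝ => μ Set.univ) h0'
    simp [Measure.dirac_apply] at this
    rw [ENNReal.inv_two_add_inv_two] at this
    exact zero_ne_one this
  set U : Fin m × Fin n → Ω → ℝ := fun p => (haem p).mk _ with hUdef
  have hUm : ∀ p, Measurable (U p) := fun p => (haem p).measurable_mk
  have haeq : ∀ p, W p =ᵐ[P] U p := fun p => (haem p).ae_eq_mk
  have hall : ∀ᵐ ω ∂P, ∀ p, W p ω = U p ω := ae_all_iff.mpr haeq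
  -- transfer independence
  have hindepU : iIndepFun U P := by
    rw [iIndepFun_iff_measure_inter_preimage_eq_mul] at hindep ⊢
    intro S sets hsets
    have h1 : P (⋂ p ∈ S, U p ⁻¹' sets p) = P (⋂ p ∈ S, W p ⁻¹' sets p) := by
      apply measure_congr
      filter_upwards [hall] with ω hω
      show (ω ∈ ⋂ p ∈ S, U p ⁻¹' sets p) = (ω ∈ ⋂ p ∈ S, W p ⁻¹' sets p)
      simp only [Set.mem_iInter, Set.mem_preimage, eq_iff_iff]
      exact forall₂_congr fun p _ => by rw [hω p]
    have h2 : ∀ p, P (U p ⁻¹' sets p) = P (W p ⁻¹' sets p) := by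
      intro p
      apply measure_congr
      filter_upwards [haeq p] with ω hω
      show (ω ∈ U p ⁻¹' sets p) = (ω ∈ W p ⁻¹' sets p)
      simp only [Set.mem_preimage, eq_iff_iff]
      rw [hω]
    rw [h1]
    rw [hindep S hsets]
    exact (Finset.prod_congr rfl fun p _ => (h2 p).symm)
  have hdistU : ∀ p : Fin m × Fin n, Measure.map (U p) P =
      (1/2 : ENNReal) • Measure.dirac (1 : ℝ) + (1/2 : ENNReal) • Measure.dirac (-1 : ℝ) := by
    intro p
    rw [← Measure.map_congr (haeq p)]
    exact hdist p.1 p.2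
  -- transfer the event
  have hevent : P {ω | ∀ i : Fin m, ∑ j, V i j ω * x j = 0}
      = P {ω | ∀ i : Fin m, ∑ j, U (i, j) ω * x j = 0} := by
    apply measure_congr
    filter_upwards [hall] with ω hω
    show (ω ∈ {ω | ∀ i : Fin m, ∑ j, V i j ω * x j = 0})
      = (ω ∈ {ω | ∀ i : Fin m, ∑ j, U (i, j) ω * x j = 0})
    simp only [Set.mem_setOf_eq, eq_iff_iff]
    have : ∀ i : Fin m, ∑ j, V i j ω * x j = ∑ j, U (i, j) ω * x j := fun i =>
      Finset.sum_congr rfl fun j _ => by rw [← hω (i, j)]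
    exact forall_congr' fun i => by rw [this i]
  rw [hevent]
  -- product bound
  set g : Fin m → (Fin n → ℝ) → ℝ := fun _ v => ∑ j, v j * x j with hgdef
  have hgm : ∀ i, Measurable (g i) := fun i =>
    Finset.measurable_sum _ fun j _ => (measurable_pi_apply _).mul_const _
  have hprod : P {ω | ∀ i : Fin m, ∑ j, U (i, j) ω * x j = 0}
      = ∏ i : Fin m, P {ω | g i (fun j => U (i, j) ω) = 0} := by
    rw [← aux_prod_rows P U hUm hindepU g hgm Finset.univ]
    congr 1
    ext ω
    simp only [Set.mem_iInter, Set.mem_setOf_eq, Finset.mem_univ, forall_true_left]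
    exact Iff.rfl
  rw [hprod]
  have hrow : ∀ i : Fin m, P {ω | g i (fun j => U (i, j) ω) = 0} ≤ 1/2 := fun i =>
    aux_row_bound P U hUm hindepU i j₀ (hdistU (i, j₀)) x hj₀
  calc ∏ i : Fin m, P {ω | g i (fun j => U (i, j) ω) = 0}
      ≤ ∏ _i : Fin m, (1/2 : ENNReal) := Finset.prod_le_prod' fun i _ => hrow i
    _ = (1/2 : ENNReal) ^ m := by rw [Finset.prod_const, Finset.card_univ, Fintype.card_fin]
    _ ≤ ENNReal.ofReal (2 * Real.exp (-(m : ℝ) / 24)) := by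
        have hhalf : ((1 : ℝ)/2) ≤ Real.exp (-1/24) := by
          have := Real.add_one_le_exp (-1/24 : ℝ)
          linarith
        have hreal : ((1 : ℝ)/2) ^ m ≤ 2 * Real.exp (-(m : ℝ) / 24) := by
          calc ((1 : ℝ)/2) ^ m ≤ (Real.exp (-1/24)) ^ m :=
                pow_le_pow_left₀ (by norm_num) hhalf m
            _ = Real.exp (-(m : ℝ) / 24) := by
                rw [← Real.exp_nat_mul]; congr 1; ring
            _ ≤ 2 * Real.exp (-(m : ℝ) / 24) := by
                nlinarith [Real.exp_pos (-(m : ℝ) / 24)]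
        have h12 : (1/2 : ENNReal) = ENNReal.ofReal (1/2) := by
          rw [ENNReal.ofReal_div_of_pos] <;> norm_num
        rw [h12, ← ENNReal.ofReal_pow (by norm_num : (0:ℝ) ≤ 1/2)]
        exact ENNReal.ofReal_le_ofReal hreal
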